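/- Let f : ℝ → ℝ^d be continuously differentiable, n a unit vector, U_i, U_j, u_i, u_j ∈ ℝ, β_i, β_j ∈ [0,1], and let λ ≥ |n·f'(ξ)| for all ξ in the convex hull of {U_i, U_j, u_i, u_j}. Define G(β_i, β_j) = n·(f(U_j) − f(U_j + β_j(u_j − U_j)))/2 + n·(f(U_i) − f(U_i + β_i(u_i − U_i)))/2 − (λ/2)(β_j(U_j − u_j) − β_i(U_i − u_i)). Then λ(min(0, U_i − u_i) − max(0, U_j − u_j)) ≤ G(β_i, β_j) ≤ λ(max(0, U_i − u_i) − min(0, U_j − u_j)). -/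

import Mathlib

open scoped RealInnerProductSpace

private lemma aux_sandwich {β δ lam A : ℝ} (hβ0 : 0 ≤ β) (hβ1 : β ≤ 1)
    (hlam : 0 ≤ lam) (hA : |A| ≤ lam * (β * |δ|)) :
    lam * min 0 δ ≤ A / 2 + lam / 2 * (β * δ) ∧
    A / 2 + lam / 2 * (β * δ) ≤ lam * max 0 δ := by
  obtain ⟨h1, h2⟩ := abs_le.mp hA
  rcases le_total 0 δ with h | h
  · rw [abs_of_nonneg h] at h1 h2
    rw [min_eq_left h, max_eq_right h]
    constructor <;> nlinarith [mul_nonneg (mul_nonneg hlam h) (sub_nonneg.mpr hβ1), mul_nonneg (mul_nonneg hlam h) hβ0]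
  · rw [abs_of_nonpos h] at h1 h2
    rw [min_eq_right h, max_eq_left h]
    constructor <;> nlinarith [mul_nonneg (mul_nonneg hlam (neg_nonneg.mpr h)) (sub_nonneg.mpr hβ1), mul_nonneg (mul_nonneg hlam (neg_nonneg.mpr h)) hβ0]

/-- Linearized sandwich estimate for the slope-limited LLF antidiffusive flux
of a nonlinear conservation law. -/
theorem nonlinear_flux_sandwich (d : ℕ)
    (f : ℝ → EuclideanSpace ℝ (Fin d)) (hf : ContDiff ℝ 1 f)
    (n : EuclideanSpace ℝ (Fin d)) (hn : ‖n‖ = 1)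
    (Ui Uj ui uj βi βj lam : ℝ)
    (hβi : βi ∈ Set.Icc (0:ℝ) 1) (hβj : βj ∈ Set.Icc (0:ℝ) 1)
    (hlam : ∀ ξ ∈ convexHull ℝ ({Ui, Uj, ui, uj} : Set ℝ),
      |(⟪deriv f ξ, n⟫ : ℝ)| ≤ lam) :
    lam * (min 0 (Ui - ui) - max 0 (Uj - uj)) ≤
        ⟪f Uj - f (Uj + βj * (uj - Uj)), n⟫ / 2
          + ⟪f Ui - f (Ui + βi * (ui - Ui)), n⟫ / 2
          - lam / 2 * (βj * (Uj - uj) - βi * (Ui - ui)) ∧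
      ⟪f Uj - f (Uj + βj * (uj - Uj)), n⟫ / 2
          + ⟪f Ui - f (Ui + βi * (ui - Ui)), n⟫ / 2
          - lam / 2 * (βj * (Uj - uj) - βi * (Ui - ui)) ≤
        lam * (max 0 (Ui - ui) - min 0 (Uj - uj)) := by
  set hull : Set ℝ := convexHull ℝ ({Ui, Uj, ui, uj} : Set ℝ) with hhull
  have hsub := subset_convexHull ℝ ({Ui, Uj, ui, uj} : Set ℝ)
  have hUi : Ui ∈ hull := hsub (by simp)
  have hUj : Uj ∈ hull := hsub (by simp)
  have hui : ui ∈ hull := hsub (by simp)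
  have huj : uj ∈ hull := hsub (by simp)
  have hconv : Convex ℝ hull := convex_convexHull ℝ _
  have hmemi : Ui + βi * (ui - Ui) ∈ hull := by
    have heq : Ui + βi * (ui - Ui) = (1 - βi) • Ui + βi • ui := by
      simp [smul_eq_mul]; ring
    rw [heq]
    exact hconv hUi hui (by linarith [hβi.2]) hβi.1 (by ring)
  have hmemj : Uj + βj * (uj - Uj) ∈ hull := by
    have heq : Uj + βj * (uj - Uj) = (1 - βj) • Uj + βj • uj := by
      simp [smul_eq_mul]; ring
    rw [heq]
    exact hconv hUj huj (by linarith [hβj.2]) hβj.1 (by ring)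
  have hlam0 : 0 ≤ lam := le_trans (abs_nonneg _) (hlam Ui hUi)
  -- the scalar function
  have hd : ∀ x, HasDerivAt (fun y => (⟪f y, n⟫ : ℝ)) ⟪deriv f x, n⟫ x := by
    intro x
    have h1 := (hf.differentiable one_ne_zero x).hasDerivAt
    simpa using h1.inner ℝ (hasDerivAt_const x n)
  have key : ∀ a ∈ hull, ∀ b ∈ hull, |(⟪f a - f b, n⟫ : ℝ)| ≤ lam * |a - b| := by
    intro a ha b hb
    have := hconv.norm_image_sub_le_of_norm_hasDerivWithin_le
      (f := fun y => (⟪f y, n⟫ : ℝ)) (f' := fun x => ⟪deriv f x, n⟫)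
      (fun x hx => (hd x).hasDerivWithinAt)
      (fun x hx => by simpa [Real.norm_eq_abs] using hlam x hx) hb ha
    simpa [Real.norm_eq_abs, inner_sub_left] using this
  -- i-term bound
  have hAi : |(⟪f Ui - f (Ui + βi * (ui - Ui)), n⟫ : ℝ)| ≤ lam * (βi * |Ui - ui|) := by
    have h := key Ui hUi _ hmemi
    have habs : |Ui - (Ui + βi * (ui - Ui))| = βi * |Ui - ui| := by
      have : Ui - (Ui + βi * (ui - Ui)) = βi * (Ui - ui) := by ring
      rw [this, abs_mul, abs_of_nonneg hβi.1]
    rwa [habs] at h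
  have hAj : |(⟪f Uj - f (Uj + βj * (uj - Uj)), n⟫ : ℝ)| ≤ lam * (βj * |uj - Uj|) := by
    have h := key Uj hUj _ hmemj
    have habs : |Uj - (Uj + βj * (uj - Uj))| = βj * |uj - Uj| := by
      have : Uj - (Uj + βj * (uj - Uj)) = -(βj * (uj - Uj)) := by ring
      rw [this, abs_neg, abs_mul, abs_of_nonneg hβj.1]
    rwa [habs] at h
  obtain ⟨li, ri⟩ := aux_sandwich hβi.1 hβi.2 hlam0 hAi
  obtain ⟨lj, rj⟩ := aux_sandwich hβj.1 hβj.2 hlam0 hAj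
  have m1 : min 0 (uj - Uj) = -(max 0 (Uj - uj)) := by
    rcases le_total Uj uj with h | h
    · rw [min_eq_left (by linarith), max_eq_left (by linarith)]; ring
    · rw [min_eq_right (by linarith), max_eq_right (by linarith)]; ring
  have m2 : max 0 (uj - Uj) = -(min 0 (Uj - uj)) := by
    rcases le_total Uj uj with h | h
    · rw [max_eq_right (by linarith), min_eq_right (by linarith)]; ring
    · rw [max_eq_left (by linarith), min_eq_left (by linarith)]; ring
  rw [m1] at lj
  rw [m2] at rj
  constructor <;> nlinarith [li, ri, lj, rj]
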